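/- Let F be a field, a_1, …, a_k, b_1, …, b_k pairwise distinct elements of F, P the k×k Cauchy matrix with entries p_{ij} = (a_i − b_j)⁻¹, and Q = P⁻¹ = [q_{ij}]. Then for each pair (i,j), p_{ij}·q_{ji} ≠ 1 if and only if ∏_{ℓ≠i}(b_j − a_ℓ) · ∏_{ℓ≠j}(a_i − b_ℓ) − ∏_{ℓ≠i}(a_i − a_ℓ) · ∏_{ℓ≠j}(b_j − b_ℓ) ≠ 0. -/

import Mathlib

open Matrix Finset

/-- For a Cauchy matrix `P` with inverse `Q`, `p_{ij} q_{ji} ≠ 1` iff the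
polynomial expression `∏_{ℓ≠i}(b_j − a_ℓ) ∏_{ℓ≠j}(a_i − b_ℓ) −
∏_{ℓ≠i}(a_i − a_ℓ) ∏_{ℓ≠j}(b_j − b_ℓ)` is nonzero. -/
theorem cauchy_matrix_condition_iff
    {F : Type*} [Field F] {k : ℕ} (a b : Fin k → F)
    (hdist : Function.Injective (Sum.elim a b : Fin k ⊕ Fin k → F)) :
    ∀ i j : Fin k,
      ((Matrix.of fun i j => (a i - b j)⁻¹ : Matrix (Fin k) (Fin k) F) i j *
        (Matrix.of fun i j => (a i - b j)⁻¹ : Matrix (Fin k) (Fin k) F)⁻¹ j i ≠ 1)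
      ↔ ((∏ ℓ ∈ univ.erase i, (b j - a ℓ)) * (∏ ℓ ∈ univ.erase j, (a i - b ℓ)) -
          (∏ ℓ ∈ univ.erase i, (a i - a ℓ)) * (∏ ℓ ∈ univ.erase j, (b j - b ℓ)) ≠ 0) := by
  -- basic nonvanishing facts
  have hab : ∀ p q : Fin k, a p - b q ≠ 0 := by
    intro p q h
    have : (Sum.inl p : Fin k ⊕ Fin k) = Sum.inr q := hdist (by simpa [sub_eq_zero] using h)
    exact absurd this (by simp)
  have ha : ∀ p q : Fin k, p ≠ q → a p - a q ≠ 0 := by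
    intro p q hpq h
    exact hpq (Sum.inl.inj (hdist (show Sum.elim a b (Sum.inl p) = Sum.elim a b (Sum.inl q)
      by simpa [sub_eq_zero] using h)))
  have hb : ∀ p q : Fin k, p ≠ q → b p - b q ≠ 0 := by
    intro p q hpq h
    exact hpq (Sum.inr.inj (hdist (show Sum.elim a b (Sum.inr p) = Sum.elim a b (Sum.inr q)
      by simpa [sub_eq_zero] using h)))
  have hbInj : Set.InjOn b ↑(univ : Finset (Fin k)) := by
    intro p _ q _ h
    by_contra hpq
    exact hb p q hpq (sub_eq_zero.mpr h)
  have hD : ∀ p : Fin k, (∏ t ∈ univ.erase p, (a p - a t)) ≠ 0 := fun p =>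
    Finset.prod_ne_zero_iff.mpr fun t ht => ha p t (Ne.symm (Finset.mem_erase.mp ht).1)
  have hB : ∀ p : Fin k, (∏ t ∈ univ.erase p, (b p - b t)) ≠ 0 := fun p =>
    Finset.prod_ne_zero_iff.mpr fun t ht => hb p t (Ne.symm (Finset.mem_erase.mp ht).1)
  have hP : ∀ p : Fin k, (∏ t : Fin k, (a p - b t)) ≠ 0 := fun p =>
    Finset.prod_ne_zero_iff.mpr fun t _ => hab p t
  -- the explicit inverse
  set Q : Matrix (Fin k) (Fin k) F := Matrix.of fun j m =>
    (∏ t : Fin k, (a m - b t)) * (∏ t ∈ univ.erase m, (a m - a t))⁻¹ *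
      (∏ t ∈ univ.erase m, (b j - a t)) * (∏ t ∈ univ.erase j, (b j - b t))⁻¹ with hQdef
  -- Lagrange interpolation identity
  have key : ∀ i m : Fin k, ∑ j : Fin k, (∏ t ∈ univ.erase m, (b j - a t)) *
      Polynomial.eval (a i) (Lagrange.basis univ b j) = ∏ t ∈ univ.erase m, (a i - a t) := by
    intro i m
    set G : Polynomial F := ∏ t ∈ univ.erase m, (Polynomial.X - Polynomial.C (a t)) with hG
    have hdeg : G.degree < ((univ : Finset (Fin k)).card : WithBot ℕ) := by
      rw [hG, Polynomial.degree_prod]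
      simp only [Polynomial.degree_X_sub_C, Finset.sum_const, nsmul_eq_mul, mul_one]
      rw [Finset.card_erase_of_mem (mem_univ m), Finset.card_univ, Fintype.card_fin]
      exact_mod_cast Nat.sub_lt (Nat.pos_of_ne_zero (by rintro rfl; exact i.elim0)) one_pos
    have heval : ∀ x : F, Polynomial.eval x G = ∏ t ∈ univ.erase m, (x - a t) := by
      intro x; rw [hG, Polynomial.eval_prod]; simp
    have h := Lagrange.eq_interpolate hbInj hdeg
    have h2 := congrArg (Polynomial.eval (a i)) h
    rw [heval] at h2
    rw [Lagrange.interpolate_apply, Polynomial.eval_finset_sum] at h2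
    simp only [Polynomial.eval_mul, Polynomial.eval_C, heval] at h2
    exact h2.symm
  -- evaluation of the Lagrange basis
  have hbasis : ∀ (x : F) (j : Fin k), Polynomial.eval x (Lagrange.basis univ b j) =
      (∏ t ∈ univ.erase j, (b j - b t))⁻¹ * ∏ t ∈ univ.erase j, (x - b t) := by
    intro x j
    rw [Lagrange.basis, Polynomial.eval_prod]
    rw [← Finset.prod_inv_distrib, ← Finset.prod_mul_distrib]
    refine Finset.prod_congr rfl fun t _ => ?_
    simp [Lagrange.basisDivisor]
  -- P * Q = 1
  have hPQ : (Matrix.of fun i j => (a i - b j)⁻¹ : Matrix (Fin k) (Fin k) F) * Q = 1 := by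
    ext i m
    rw [Matrix.mul_apply]
    have hterm : ∀ j : Fin k, (Matrix.of fun i j => (a i - b j)⁻¹ :
        Matrix (Fin k) (Fin k) F) i j * Q j m =
        (∏ t : Fin k, (a m - b t)) * (∏ t ∈ univ.erase m, (a m - a t))⁻¹ *
          (∏ t : Fin k, (a i - b t))⁻¹ *
          ((∏ t ∈ univ.erase m, (b j - a t)) * Polynomial.eval (a i) (Lagrange.basis univ b j)) := by
      intro j
      have hinv : (a i - b j)⁻¹ = (∏ t ∈ univ.erase j, (a i - b t)) *
          (∏ t : Fin k, (a i - b t))⁻¹ := by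
        rw [← Finset.mul_prod_erase univ (fun t => a i - b t) (mem_univ j)]
        rw [mul_inv, ← mul_assoc, mul_comm ((∏ t ∈ univ.erase j, (a i - b t)))]
        rw [mul_assoc, mul_inv_cancel₀ (Finset.prod_ne_zero_iff.mpr fun t _ => hab i t),
          mul_one]
      rw [hbasis, hQdef]
      simp only [Matrix.of_apply]
      rw [hinv]
      ring
    rw [Finset.sum_congr rfl fun j _ => hterm j, ← Finset.mul_sum, key i m]
    rcases eq_or_ne i m with rfl | him
    · rw [Matrix.one_apply_eq]
      field_simp
      rw [mul_comm]
      exact div_self (mul_ne_zero (hD i) (hP i))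
    · rw [Matrix.one_apply_ne him]
      have : (∏ t ∈ univ.erase m, (a i - a t)) = 0 :=
        Finset.prod_eq_zero (Finset.mem_erase.mpr ⟨him, mem_univ i⟩) (sub_self _)
      rw [this, mul_zero]
  have hinvQ : (Matrix.of fun i j => (a i - b j)⁻¹ : Matrix (Fin k) (Fin k) F)⁻¹ = Q :=
    Matrix.inv_eq_right_inv hPQ
  intro i j
  rw [hinvQ]
  have hpq : (Matrix.of fun i j => (a i - b j)⁻¹ : Matrix (Fin k) (Fin k) F) i j * Q j i =
      ((∏ ℓ ∈ univ.erase i, (b j - a ℓ)) * (∏ ℓ ∈ univ.erase j, (a i - b ℓ))) /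
        ((∏ ℓ ∈ univ.erase i, (a i - a ℓ)) * (∏ ℓ ∈ univ.erase j, (b j - b ℓ))) := by
    have hinv : (a i - b j)⁻¹ = (∏ t ∈ univ.erase j, (a i - b t)) *
        (∏ t : Fin k, (a i - b t))⁻¹ := by
      rw [← Finset.mul_prod_erase univ (fun t => a i - b t) (mem_univ j)]
      rw [mul_inv, ← mul_assoc, mul_comm ((∏ t ∈ univ.erase j, (a i - b t)))]
      rw [mul_assoc, mul_inv_cancel₀ (Finset.prod_ne_zero_iff.mpr fun t _ => hab i t), mul_one]
    rw [hQdef]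
    simp only [Matrix.of_apply]
    rw [hinv, eq_div_iff (mul_ne_zero (hD i) (hB j))]
    field_simp [hP i, hD i, hB j]
  rw [hpq, sub_ne_zero, not_iff_not,
    div_eq_one_iff_eq (mul_ne_zero (hD i) (hB j))]
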